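/- Let 𝔽 be one of ℂ, ℝ, ℚ and fix an integer q ≥ 0. There is a constant K depending only on q such that the following holds. Let 0 < ε ≤ 1 and let v₁,…,v_q ∈ 𝔽ⁿ be ε-independent vectors with ‖v_i‖∞ ≤ 1 for each i. Let 0 ≤ δ < ε/2 and let v ∈ 𝔽ⁿ be a vector with ‖v‖∞ ≤ 1. Then at least one of the following holds: (a) the vectors v₁,…,v_q, v are δ-independent, or (b) there is a vector v* in the linear span of v₁,…,v_q with ‖v − v*‖₁ ≤ K·ε^{−q}·δ·n. -/
import Mathlib


/-- Vectors `v₁,…,v_q ∈ 𝔽ⁿ` are `ε`-independent if there do not exist linearly dependent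
vectors `v₁',…,v_q'` with `‖v₁−v₁'‖₁ + … + ‖v_q−v_q'‖₁ ≤ εn`. -/
def EpsIndependent (𝔽 : Type*) [NormedField 𝔽] {q n : ℕ} (ε : ℝ)
    (v : Fin q → Fin n → 𝔽) : Prop :=
  ¬ ∃ v' : Fin q → Fin n → 𝔽, ¬ LinearIndependent 𝔽 v' ∧
      ∑ i, ∑ j, ‖v i j - v' i j‖ ≤ ε * n

def Statement18 (𝔽 : Type) [NormedField 𝔽] : Prop :=
  ∀ q : ℕ, ∃ K : ℝ,
    ∀ ε : ℝ, 0 < ε → ε ≤ 1 →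
    ∀ (n : ℕ) (v : Fin q → Fin n → 𝔽),
      EpsIndependent 𝔽 ε v → (∀ i j, ‖v i j‖ ≤ 1) →
      ∀ δ : ℝ, 0 ≤ δ → δ < ε / 2 →
      ∀ w : Fin n → 𝔽, (∀ j, ‖w j‖ ≤ 1) →
        -- (a) `v₁,…,v_q, w` are `δ`-independent, or
        EpsIndependent 𝔽 δ (Fin.snoc v w) ∨
        -- (b) some `w*` in the span of `v₁,…,v_q` has `‖w − w*‖₁ ≤ K·ε^{−q}·δ·n`
        ∃ wstar ∈ Submodule.span 𝔽 (Set.range v),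
          ∑ j, ‖w j - wstar j‖ ≤ K * (ε ^ q)⁻¹ * δ * n

theorem statement18_general (𝔽 : Type) [NormedField 𝔽] : Statement18 𝔽 := by
  intro q
  refine ⟨5, ?_⟩
  intro ε hε hε1 n v hind hvb δ hδ0 hδε w hwb
  by_cases ha : EpsIndependent 𝔽 δ (Fin.snoc v w)
  · exact Or.inl ha
  right
  rw [EpsIndependent, not_not] at ha
  obtain ⟨u, hdep, hsum⟩ := ha
  have hn0 : (0:ℝ) ≤ n := Nat.cast_nonneg n
  set v' : Fin q → Fin n → 𝔽 := fun i => u i.castSucc with hv'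
  set w' : Fin n → 𝔽 := u (Fin.last q) with hw'
  have husnoc : u = Fin.snoc v' w' := (Fin.snoc_init_self u).symm
  have sumnn : ∀ (m : ℕ) (f : Fin m → ℝ), (∀ i, 0 ≤ f i) → 0 ≤ ∑ i, f i := by
    intro m f hf
    exact Finset.sum_nonneg fun i _ => hf i
  have hsplit : (∑ i, ∑ j, ‖v i j - v' i j‖) + ∑ j, ‖w j - w' j‖ ≤ δ * n := by
    rw [Fin.sum_univ_castSucc] at hsum
    simpa [hv', hw'] using hsum
  have hSvnn : 0 ≤ ∑ i, ∑ j, ‖v i j - v' i j‖ :=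
    sumnn _ _ fun i => sumnn _ _ fun j => norm_nonneg _
  have hSwnn : 0 ≤ ∑ j, ‖w j - w' j‖ := sumnn _ _ fun j => norm_nonneg _
  have hSv : ∑ i, ∑ j, ‖v i j - v' i j‖ ≤ δ * n := by linarith
  have hSw : ∑ j, ‖w j - w' j‖ ≤ δ * n := by linarith
  -- v' is linearly independent
  have hvi : LinearIndependent 𝔽 v' := by
    by_contra h
    exact hind ⟨v', h, le_trans hSv (by nlinarith)⟩
  -- w' is in the span of v'
  have hw'span : w' ∈ Submodule.span 𝔽 (Set.range v') := by
    by_contra h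
    exact hdep (husnoc ▸ (linearIndependent_fin_snoc.mpr ⟨hvi, h⟩))
  obtain ⟨c, hc⟩ := (Submodule.mem_span_range_iff_exists_fun 𝔽).mp hw'span
  -- ℓ¹ norm of w' is at most (1+δ)n
  have hW' : ∑ j, ‖w' j‖ ≤ (1 + δ) * n := by
    have h1 : ∀ j, ‖w' j‖ ≤ ‖w j‖ + ‖w j - w' j‖ := by
      intro j
      calc ‖w' j‖ = ‖w j - (w j - w' j)‖ := by ring_nf
        _ ≤ ‖w j‖ + ‖w j - w' j‖ := norm_sub_le _ _
    calc ∑ j, ‖w' j‖ ≤ ∑ j, (‖w j‖ + ‖w j - w' j‖) := Finset.sum_le_sum fun j _ => h1 j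
      _ = (∑ j, ‖w j‖) + ∑ j, ‖w j - w' j‖ := Finset.sum_add_distrib
      _ ≤ (∑ j : Fin n, (1:ℝ)) + δ * n := by
          gcongr with j
          · exact hwb j
      _ = (1 + δ) * n := by simp; ring
  -- coefficient bound
  have hcb : ∀ k, ‖c k‖ ≤ 4 / ε := by
    intro k
    by_contra hk
    push_neg at hk
    have h4ε : (0:ℝ) < 4 / ε := by positivity
    have hck0 : c k ≠ 0 := by
      intro h
      rw [h, norm_zero] at hk
      linarith
    have hcknorm : (0:ℝ) < ‖c k‖ := lt_trans h4ε hk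
    set v'' : Fin q → Fin n → 𝔽 :=
      Function.update v' k (v' k - (c k)⁻¹ • w') with hv''
    have hupd_ne : ∀ i, i ≠ k → v'' i = v' i := fun i hi =>
      Function.update_of_ne hi _ _
    have hupd_k : v'' k = v' k - (c k)⁻¹ • w' := Function.update_self _ _ _
    -- v'' are linearly dependent
    have hdep2 : ¬ LinearIndependent 𝔽 v'' := by
      intro hli
      apply hck0
      refine Fintype.linearIndependent_iff.mp hli c ?_ k
      have hdiff : ∑ i, c i • v'' i - ∑ i, c i • v' i = c k • (v'' k - v' k) := by
        rw [← Finset.sum_sub_distrib]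
        rw [Finset.sum_eq_single k]
        · rw [smul_sub]
        · intro i _ hi
          rw [hupd_ne i hi, sub_self]
        · intro h
          exact absurd (Finset.mem_univ k) h
      have : c k • (v'' k - v' k) = -w' := by
        rw [hupd_k]
        rw [sub_sub_cancel_left, smul_neg, smul_smul, mul_inv_cancel₀ hck0, one_smul]
      rw [this, hc] at hdiff
      have : ∑ i, c i • v'' i = 0 := by
        rw [sub_eq_iff_eq_add] at hdiff
        rw [hdiff, neg_add_cancel]
      rw [this]
    -- distance bound contradicting ε-independence of v
    apply hind
    refine ⟨v'', hdep2, ?_⟩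
    have hkk : ∑ j, ‖v k j - v'' k j‖ ≤
        (∑ j, ‖v k j - v' k j‖) + ‖c k‖⁻¹ * ∑ j, ‖w' j‖ := by
      have h1 : ∀ j, ‖v k j - v'' k j‖ ≤ ‖v k j - v' k j‖ + ‖c k‖⁻¹ * ‖w' j‖ := by
        intro j
        have : v k j - v'' k j = (v k j - v' k j) + (c k)⁻¹ * w' j := by
          rw [hupd_k]
          simp [Pi.sub_apply, Pi.smul_apply, smul_eq_mul]
          ring
        rw [this]
        calc ‖(v k j - v' k j) + (c k)⁻¹ * w' j‖
            ≤ ‖v k j - v' k j‖ + ‖(c k)⁻¹ * w' j‖ := norm_add_le _ _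
          _ = ‖v k j - v' k j‖ + ‖c k‖⁻¹ * ‖w' j‖ := by rw [norm_mul, norm_inv]
      calc ∑ j, ‖v k j - v'' k j‖
          ≤ ∑ j, (‖v k j - v' k j‖ + ‖c k‖⁻¹ * ‖w' j‖) :=
            Finset.sum_le_sum fun j _ => h1 j
        _ = (∑ j, ‖v k j - v' k j‖) + ‖c k‖⁻¹ * ∑ j, ‖w' j‖ := by
            rw [Finset.sum_add_distrib, Finset.mul_sum]
    have hsum2 : ∑ i, ∑ j, ‖v i j - v'' i j‖ ≤
        (∑ i, ∑ j, ‖v i j - v' i j‖) + ‖c k‖⁻¹ * ∑ j, ‖w' j‖ := by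
      have e1 : ∑ i, ∑ j, ‖v i j - v'' i j‖ =
          (∑ i ∈ Finset.univ.erase k, ∑ j, ‖v i j - v' i j‖) + ∑ j, ‖v k j - v'' k j‖ := by
        rw [← Finset.sum_erase_add _ _ (Finset.mem_univ k)]
        congr 1
        exact Finset.sum_congr rfl fun i hi => by
          rw [hupd_ne i (Finset.ne_of_mem_erase hi)]
      have e2 : ∑ i, ∑ j, ‖v i j - v' i j‖ =
          (∑ i ∈ Finset.univ.erase k, ∑ j, ‖v i j - v' i j‖) + ∑ j, ‖v k j - v' k j‖ :=
        (Finset.sum_erase_add _ _ (Finset.mem_univ k)).symm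
      rw [e1, e2]
      linarith [hkk]
    have hinv : ‖c k‖⁻¹ < ε / 4 := by
      have h41 : ε / 4 * (4 / ε) = 1 := by field_simp
      rw [inv_lt_iff_one_lt_mul₀ hcknorm]
      nlinarith [mul_lt_mul_of_pos_left hk (show (0:ℝ) < ε / 4 by positivity)]
    have hW'nn : 0 ≤ ∑ j, ‖w' j‖ := sumnn _ _ fun j => norm_nonneg _
    have hδhalf : δ ≤ 1 / 2 := by linarith
    calc ∑ i, ∑ j, ‖v i j - v'' i j‖
        ≤ (∑ i, ∑ j, ‖v i j - v' i j‖) + ‖c k‖⁻¹ * ∑ j, ‖w' j‖ := hsum2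
      _ ≤ δ * n + (ε / 4) * ((1 + δ) * n) := by
          have : ‖c k‖⁻¹ * ∑ j, ‖w' j‖ ≤ (ε / 4) * ((1 + δ) * n) := by
            apply mul_le_mul hinv.le hW' hW'nn (by positivity)
          linarith
      _ ≤ ε * n := by nlinarith
  -- the approximating vector
  refine ⟨∑ i, c i • v i, ?_, ?_⟩
  · exact Submodule.sum_mem _ fun i _ =>
      Submodule.smul_mem _ _ (Submodule.subset_span ⟨i, rfl⟩)
  · have hper : ∀ j, ‖w j - (∑ i, c i • v i) j‖ ≤
        ‖w j - w' j‖ + ∑ i, (4 / ε) * ‖v i j - v' i j‖ := by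
      intro j
      have hw'j : w' j = ∑ i, c i * v' i j := by
        rw [← hc]
        simp [Finset.sum_apply]
      have hvj : (∑ i, c i • v i) j = ∑ i, c i * v i j := by
        simp [Finset.sum_apply]
      have hs : ∑ i, c i * (v' i j - v i j)
          = (∑ i, c i * v' i j) - ∑ i, c i * v i j := by
        rw [← Finset.sum_sub_distrib]
        exact Finset.sum_congr rfl fun i _ => by ring
      have heq : w j - (∑ i, c i • v i) j
          = (w j - w' j) + ∑ i, c i * (v' i j - v i j) := by
        rw [hvj, hw'j, hs]
        ring
      rw [heq]
      calc ‖(w j - w' j) + ∑ i, c i * (v' i j - v i j)‖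
          ≤ ‖w j - w' j‖ + ‖∑ i, c i * (v' i j - v i j)‖ := norm_add_le _ _
        _ ≤ ‖w j - w' j‖ + ∑ i, ‖c i * (v' i j - v i j)‖ := by
            gcongr
            exact norm_sum_le _ _
        _ ≤ ‖w j - w' j‖ + ∑ i, (4 / ε) * ‖v i j - v' i j‖ := by
            gcongr with i
            rw [norm_mul, norm_sub_rev]
            exact mul_le_mul_of_nonneg_right (hcb i) (norm_nonneg _)
    have hmain : ∑ j, ‖w j - (∑ i, c i • v i) j‖ ≤
        (∑ j, ‖w j - w' j‖) + (4 / ε) * ∑ i, ∑ j, ‖v i j - v' i j‖ := by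
      calc ∑ j, ‖w j - (∑ i, c i • v i) j‖
          ≤ ∑ j, (‖w j - w' j‖ + ∑ i, (4 / ε) * ‖v i j - v' i j‖) :=
            Finset.sum_le_sum fun j _ => hper j
        _ = (∑ j, ‖w j - w' j‖) + ∑ j, ∑ i, (4 / ε) * ‖v i j - v' i j‖ :=
            Finset.sum_add_distrib
        _ = (∑ j, ‖w j - w' j‖) + (4 / ε) * ∑ i, ∑ j, ‖v i j - v' i j‖ := by
            rw [Finset.sum_comm]
            simp_rw [← Finset.mul_sum]
    rcases Nat.eq_zero_or_pos q with hq | hq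
    · subst hq
      have hSv0 : ∑ i : Fin 0, ∑ j, ‖v i j - v' i j‖ = 0 := by simp
      rw [hSv0, mul_zero, add_zero] at hmain
      have h50 : (5:ℝ) * ((ε ^ 0)⁻¹) * δ * ↑n = 5 * (δ * ↑n) := by norm_num; ring
      rw [h50]
      have hδn : 0 ≤ δ * (n:ℝ) := mul_nonneg hδ0 hn0
      linarith
    · have hεq : ε ^ q ≤ ε := by
        calc ε ^ q ≤ ε ^ 1 := pow_le_pow_of_le_one hε.le hε1 hq
          _ = ε := pow_one ε
      have hεqpos : 0 < ε ^ q := pow_pos hε q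
      have hinvle : ε⁻¹ ≤ (ε ^ q)⁻¹ := by
        apply inv_anti₀ hεqpos hεq
      have h1 : ∑ j, ‖w j - (∑ i, c i • v i) j‖ ≤ (1 + 4 / ε) * (δ * n) := by
        calc ∑ j, ‖w j - (∑ i, c i • v i) j‖
            ≤ (∑ j, ‖w j - w' j‖) + (4 / ε) * ∑ i, ∑ j, ‖v i j - v' i j‖ := hmain
          _ ≤ δ * n + (4 / ε) * (δ * n) := by
              have := mul_le_mul_of_nonneg_left hSv (le_of_lt (by positivity : (0:ℝ) < 4 / ε))
              linarith
          _ = (1 + 4 / ε) * (δ * n) := by ring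
      have h2 : (1 + 4 / ε) * (δ * n) ≤ 5 * (ε ^ q)⁻¹ * δ * n := by
        have hδn : 0 ≤ δ * n := mul_nonneg hδ0 hn0
        have h1ε : 1 ≤ 1 / ε := by rw [le_div_iff₀ hε]; linarith
        have h3 : 1 + 4 / ε ≤ 5 / ε := by
          have h5 : (5:ℝ) / ε = 1 / ε + 4 / ε := by ring
          linarith
        have h4 : (5:ℝ) / ε ≤ 5 * (ε ^ q)⁻¹ := by
          rw [div_eq_mul_inv]
          linarith
        calc (1 + 4 / ε) * (δ * n) ≤ (5 / ε) * (δ * n) :=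
              mul_le_mul_of_nonneg_right h3 hδn
          _ ≤ 5 * (ε ^ q)⁻¹ * (δ * n) := mul_le_mul_of_nonneg_right h4 hδn
          _ = 5 * (ε ^ q)⁻¹ * δ * n := by ring
      linarith

theorem statement18 : Statement18 ℂ ∧ Statement18 ℝ ∧ Statement18 ℚ := by
  exact ⟨statement18_general ℂ, statement18_general ℝ, statement18_general ℚ⟩
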